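/- The operator P₃ : Dom(P₃) ⊂ C₃(Ḡ) → C₃(Ḡ), defined by P₃u = Δu on Dom(P₃) = {u ∈ C₃(Ḡ) : Δu ∈ C₃(Ḡ)} (with Δu understood in the sense of distributions), admits a closure P̄₃ : Dom(P̄₃) ⊂ C₃(Ḡ) → C₃(Ḡ) as an unbounded operator in the Banach space C₃(Ḡ). -/

import Mathlib

open MeasureTheory Metric Set Filter Topology BoundedContinuousFunction

noncomputable section

/-- The plane `ℝ²`. -/
abbrev E2 := EuclideanSpace ℝ (Fin 2)

/-- The Laplacian of a function `φ : ℝ² → ℝ`. -/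
def lap (φ : E2 → ℝ) (x : E2) : ℝ :=
  ∑ i : Fin 2,
    fderiv ℝ (fun y => fderiv ℝ φ y (EuclideanSpace.single i 1)) x (EuclideanSpace.single i 1)

/-- `f` is the Laplacian of `u` on the open set `G` in the sense of distributions. -/
def IsDistLaplacianOn (G : Set E2) (u f : E2 → ℝ) : Prop :=
  ∀ φ : E2 → ℝ, ContDiff ℝ (⊤ : ℕ∞) φ → HasCompactSupport φ → tsupport φ ⊆ G →
    ∫ x in G, u x * lap φ x = ∫ x in G, f x * φ x

/-- Extension by zero (to the whole plane) of a function defined on `closure G`. -/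
def extendByZero (G : Set E2) (u : ↥(closure G) →ᵇ ℝ) : E2 → ℝ :=
  Function.extend Subtype.val (⇑u) 0

/-- `Γ` is a smooth (`C^∞`) regular simple curve. -/
def IsSmoothCurve (Γ : Set E2) : Prop :=
  ∃ γ : ℝ → E2, ContDiff ℝ (⊤ : ℕ∞) γ ∧ InjOn γ (Ioo 0 1) ∧
    (∀ t ∈ Ioo (0 : ℝ) 1, deriv γ t ≠ 0) ∧ γ '' Ioo 0 1 = Γ

/-- Near the point `g`, the region `G` coincides with a plane angle of opening `π`
(i.e. with a half-plane whose boundary line passes through `g`). -/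
def HasFlatAngleAt (G : Set E2) (g : E2) (ε : ℝ) : Prop :=
  ∃ ν : E2, ν ≠ 0 ∧ G ∩ ball g ε = {x | 0 < (inner ℝ ν (x - g) : ℝ)} ∩ ball g ε

/-- `Ω` is a smooth nondegenerate transformation (injective with everywhere
invertible differential) defined on a neighborhood of the curve `closure Γ`. -/
def IsSmoothNondegOn (Ω : E2 → E2) (Γ : Set E2) : Prop :=
  ∃ U : Set E2, IsOpen U ∧ closure Γ ⊆ U ∧ ContDiffOn ℝ (⊤ : ℕ∞) Ω U ∧
    InjOn Ω U ∧ ∀ y ∈ U, LinearMap.det ((fderiv ℝ Ω y) : E2 →ₗ[ℝ] E2) ≠ 0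

/-- `b ∈ C^∞(closure Γ)`: `b` is smooth on a neighborhood of `closure Γ`. -/
def IsSmoothOnCl (b : E2 → ℝ) (Γ : Set E2) : Prop :=
  ∃ U : Set E2, IsOpen U ∧ closure Γ ⊆ U ∧ ContDiffOn ℝ (⊤ : ℕ∞) b U

/-- The geometric data of Example 3: a bounded plane region `G` with smooth boundary
`∂G = Γ₁ ∪ Γ₂ ∪ {g₁, g₂}`, coinciding with a plane angle of opening `π` near `g₁, g₂`,
coefficients `b₁, b₂` equal to `1` near `g₁`, and smooth nondegenerate transformations
`Ω₁, Ω₂` mapping `Γ₁, Γ₂` into `G`, fixing `g₁`, and equal near `g₁` to the rotation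
by the angle `π/2` about `g₁` inwards the region `G`. -/
structure Setting3 where
  /-- the region -/
  G : Set E2
  /-- the boundary arcs -/
  Γ₁ : Set E2
  Γ₂ : Set E2
  /-- the conjugation points, `𝒦 = {g₁, g₂}` -/
  g₁ : E2
  g₂ : E2
  ε : ℝ
  hG_open : IsOpen G
  hG_conn : IsConnected G
  hG_bdd : Bornology.IsBounded G
  hg_ne : g₁ ≠ g₂
  /-- `∂G = Γ₁ ∪ Γ₂ ∪ 𝒦` -/
  hbdry : frontier G = Γ₁ ∪ Γ₂ ∪ {g₁, g₂}
  /-- `Γ₁ ∩ Γ₂ = ∅` -/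
  hΓ_disj : Γ₁ ∩ Γ₂ = ∅
  hK_disj : ({g₁, g₂} : Set E2) ∩ (Γ₁ ∪ Γ₂) = ∅
  /-- `closure Γ₁ ∩ closure Γ₂ = 𝒦` -/
  hΓcl : closure Γ₁ ∩ closure Γ₂ = {g₁, g₂}
  /-- `Γ₁`, `Γ₂` are open in the topology of `∂G` -/
  hΓ₁_open : ∃ V : Set E2, IsOpen V ∧ Γ₁ = V ∩ frontier G
  hΓ₂_open : ∃ V : Set E2, IsOpen V ∧ Γ₂ = V ∩ frontier G
  hΓ₁_conn : IsConnected Γ₁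
  hΓ₂_conn : IsConnected Γ₂
  hΓ₁_curve : IsSmoothCurve Γ₁
  hΓ₂_curve : IsSmoothCurve Γ₂
  hε : 0 < ε
  /-- `G` coincides with a plane angle of opening `π` near `g₁` and `g₂` -/
  hangle₁ : HasFlatAngleAt G g₁ ε
  hangle₂ : HasFlatAngleAt G g₂ ε
  /-- the coefficients in the nonlocal conditions -/
  b₁ : E2 → ℝ
  b₂ : E2 → ℝ
  /-- the transformations in the nonlocal conditions -/
  Ω₁ : E2 → E2
  Ω₂ : E2 → E2
  hb₁_smooth : IsSmoothOnCl b₁ Γ₁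
  hb₂_smooth : IsSmoothOnCl b₂ Γ₂
  hb₁_range : ∀ y ∈ closure Γ₁, 0 ≤ b₁ y ∧ b₁ y ≤ 1
  hb₂_range : ∀ y ∈ closure Γ₂, 0 ≤ b₂ y ∧ b₂ y ≤ 1
  /-- `b₁ = b₂ = 1` on `𝒪_{ε/2}(g₁)` -/
  hb₁_one : ∀ y ∈ closure Γ₁ ∩ ball g₁ (ε / 2), b₁ y = 1
  hb₂_one : ∀ y ∈ closure Γ₂ ∩ ball g₁ (ε / 2), b₂ y = 1
  /-- `b₁, b₂ = 0` outside `𝒪_ε(g₁)` -/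
  hb₁_zero : ∀ y ∈ closure Γ₁, y ∉ ball g₁ ε → b₁ y = 0
  hb₂_zero : ∀ y ∈ closure Γ₂, y ∉ ball g₁ ε → b₂ y = 0
  hΩ₁_nondeg : IsSmoothNondegOn Ω₁ Γ₁
  hΩ₂_nondeg : IsSmoothNondegOn Ω₂ Γ₂
  /-- `Ω_j(Γ_j) ⊆ G` -/
  hΩ₁_maps : Ω₁ '' Γ₁ ⊆ G
  hΩ₂_maps : Ω₂ '' Γ₂ ⊆ G
  /-- `Ω_j(g₁) = g₁` -/
  hΩ₁_g₁ : Ω₁ g₁ = g₁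
  hΩ₂_g₁ : Ω₂ g₁ = g₁
  /-- on `𝒪_ε(g₁)`, each `Ω_j` is the rotation by the angle `π/2` about `g₁`
  (a linear isometry `R` with `det R = 1` and `R² = -id`) inwards the region `G` -/
  hΩ₁_rot : ∃ R : E2 ≃ₗᵢ[ℝ] E2, R.toLinearEquiv.det = 1 ∧ (∀ x, R (R x) = -x) ∧
    ∀ y ∈ ball g₁ ε, Ω₁ y = g₁ + R (y - g₁)
  hΩ₂_rot : ∃ R : E2 ≃ₗᵢ[ℝ] E2, R.toLinearEquiv.det = 1 ∧ (∀ x, R (R x) = -x) ∧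
    ∀ y ∈ ball g₁ ε, Ω₂ y = g₁ + R (y - g₁)
  -- inclusions (consequences of the above) needed to state the nonlocal conditions
  hΓ₁_sub : Γ₁ ⊆ closure G
  hΓ₂_sub : Γ₂ ⊆ closure G
  hg₁_sub : g₁ ∈ closure G
  hg₂_sub : g₂ ∈ closure G
  hΩ₁_sub : ∀ y ∈ Γ₁, Ω₁ y ∈ closure G
  hΩ₂_sub : ∀ y ∈ Γ₂, Ω₂ y ∈ closure G

/-- The space `C₃(Ḡ)`: continuous functions `u` on `closure G` satisfying the nonlocal
conditions `u(y) - b_j(y) u(Ω_j(y)) = 0` for `y ∈ Γ_j`, `j = 1, 2`, and `u(y) = 0`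
for `y ∈ 𝒦 = {g₁, g₂}`. -/
def Setting3.C3 (S : Setting3) : Set (↥(closure S.G) →ᵇ ℝ) :=
  {u | (∀ y, ∀ hy : y ∈ S.Γ₁,
          u ⟨y, S.hΓ₁_sub hy⟩ - S.b₁ y * u ⟨S.Ω₁ y, S.hΩ₁_sub y hy⟩ = 0) ∧
       (∀ y, ∀ hy : y ∈ S.Γ₂,
          u ⟨y, S.hΓ₂_sub hy⟩ - S.b₂ y * u ⟨S.Ω₂ y, S.hΩ₂_sub y hy⟩ = 0) ∧
       u ⟨S.g₁, S.hg₁_sub⟩ = 0 ∧ u ⟨S.g₂, S.hg₂_sub⟩ = 0}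

/-- The graph of the operator `P₃ : Dom(P₃) ⊆ C₃(Ḡ) → C₃(Ḡ)`, `P₃ u = Δu` on
`Dom(P₃) = {u ∈ C₃(Ḡ) : Δu ∈ C₃(Ḡ)}`, the Laplacian taken in the sense of distributions. -/
def Setting3.graphP (S : Setting3) :
    Set ((↥(closure S.G) →ᵇ ℝ) × (↥(closure S.G) →ᵇ ℝ)) :=
  {p | p.1 ∈ S.C3 ∧ p.2 ∈ S.C3 ∧
    IsDistLaplacianOn S.G (extendByZero S.G p.1) (extendByZero S.G p.2)}

namespace P3Aux

variable {G : Set E2}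

lemma extendByZero_apply (u : ↥(closure G) →ᵇ ℝ) {x : E2} (hx : x ∈ closure G) :
    extendByZero G u x = u ⟨x, hx⟩ := by
  have := Subtype.val_injective.extend_apply (⇑u) (0 : E2 → ℝ) ⟨x, hx⟩
  simpa [extendByZero] using this

lemma extendByZero_apply' (u : ↥(closure G) →ᵇ ℝ) {x : E2} (hx : x ∉ closure G) :
    extendByZero G u x = 0 := by
  rw [extendByZero, Function.extend_apply']
  · rfl
  · rintro ⟨a, rfl⟩; exact hx a.2

lemma extendByZero_sub (u v : ↥(closure G) →ᵇ ℝ) :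
    extendByZero G (u - v) = extendByZero G u - extendByZero G v := by
  funext x
  by_cases hx : x ∈ closure G
  · simp [extendByZero_apply _ hx]
  · simp [extendByZero_apply' _ hx]

lemma continuousOn_extendByZero (u : ↥(closure G) →ᵇ ℝ) :
    ContinuousOn (extendByZero G u) (closure G) := by
  rw [continuousOn_iff_continuous_restrict]
  have h : Set.restrict (closure G) (extendByZero G u) = ⇑u := by
    funext x
    exact extendByZero_apply u x.2
  rw [show (closure G).domRestrict (extendByZero G u) = ⇑u from h]
  exact u.continuous

lemma norm_extendByZero_le (u : ↥(closure G) →ᵇ ℝ) (x : E2) :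
    ‖extendByZero G u x‖ ≤ ‖u‖ := by
  by_cases hx : x ∈ closure G
  · rw [extendByZero_apply u hx]; exact u.norm_coe_le_norm _
  · rw [extendByZero_apply' u hx]; simp

lemma integrableOn_ext_mul (hGo : IsOpen G) (hGb : Bornology.IsBounded G) (u : ↥(closure G) →ᵇ ℝ) {ψ : E2 → ℝ}
    (hψ : Continuous ψ) {C : ℝ} (hC : ∀ x, ‖ψ x‖ ≤ C) :
    MeasureTheory.IntegrableOn (fun x => extendByZero G u x * ψ x) G := by
  have hmeas : MeasurableSet G := hGo.measurableSet
  have hcon : ContinuousOn (fun x => extendByZero G u x * ψ x) G :=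
    (((continuousOn_extendByZero u).mono subset_closure).mul hψ.continuousOn)
  have hfin : volume G < ⊤ := hGb.measure_lt_top
  have : IsFiniteMeasure (volume.restrict G) :=
    ⟨by rwa [Measure.restrict_apply_univ]⟩
  refine ⟨hcon.aestronglyMeasurable hmeas, ?_⟩
  apply MeasureTheory.HasFiniteIntegral.of_bounded (C := ‖u‖ * C)
  refine ae_of_all _ fun x => ?_
  calc ‖extendByZero G u x * ψ x‖ = ‖extendByZero G u x‖ * ‖ψ x‖ := norm_mul _ _
    _ ≤ ‖u‖ * C :=
      mul_le_mul (norm_extendByZero_le u x) (hC x) (norm_nonneg _) (norm_nonneg _)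

lemma norm_integral_ext_mul_le (hGo : IsOpen G) (hGb : Bornology.IsBounded G) (u : ↥(closure G) →ᵇ ℝ) {ψ : E2 → ℝ} {C : ℝ}
    (hC : ∀ x, ‖ψ x‖ ≤ C) :
    ‖∫ x in G, extendByZero G u x * ψ x‖ ≤ ‖u‖ * C * (volume G).toReal := by
  apply norm_setIntegral_le_of_norm_le_const hGb.measure_lt_top
  intro x _
  calc ‖extendByZero G u x * ψ x‖ = ‖extendByZero G u x‖ * ‖ψ x‖ := norm_mul _ _
    _ ≤ ‖u‖ * C :=
      mul_le_mul (norm_extendByZero_le u x) (hC x) (norm_nonneg _) (norm_nonneg _)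

/-- The functional `u ↦ ∫_G (ext u) ψ` is Lipschitz. -/
lemma tendsto_integral_ext_mul (hGo : IsOpen G) (hGb : Bornology.IsBounded G) {a : ℕ → ↥(closure G) →ᵇ ℝ} {u : ↥(closure G) →ᵇ ℝ}
    (hlim : Filter.Tendsto a Filter.atTop (nhds u)) {ψ : E2 → ℝ}
    (hψ : Continuous ψ) {C : ℝ} (hC : ∀ x, ‖ψ x‖ ≤ C) :
    Filter.Tendsto (fun n => ∫ x in G, extendByZero G (a n) x * ψ x)
      Filter.atTop (nhds (∫ x in G, extendByZero G u x * ψ x)) := by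
  rw [tendsto_iff_dist_tendsto_zero]
  have hb : ∀ n, dist (∫ x in G, extendByZero G (a n) x * ψ x)
      (∫ x in G, extendByZero G u x * ψ x) ≤
      dist (a n) u * C * (volume G).toReal := by
    intro n
    have hint : (∫ x in G, extendByZero G (a n) x * ψ x)
        - (∫ x in G, extendByZero G u x * ψ x)
        = ∫ x in G, extendByZero G (a n - u) x * ψ x := by
      rw [← MeasureTheory.integral_sub (integrableOn_ext_mul hGo hGb _ hψ hC)
        (integrableOn_ext_mul hGo hGb _ hψ hC)]
      congr 1
      funext x
      rw [extendByZero_sub]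
      simp [sub_mul]
    rw [dist_eq_norm, hint, dist_eq_norm]
    exact norm_integral_ext_mul_le hGo hGb _ hC
  have h0 : Filter.Tendsto (fun n => dist (a n) u * C * (volume G).toReal)
      Filter.atTop (nhds 0) := by
    have := (tendsto_iff_dist_tendsto_zero.1 hlim)
    simpa using (this.mul_const C).mul_const (volume G).toReal
  exact squeeze_zero (fun n => dist_nonneg) hb h0

end P3Aux

namespace P3Aux

lemma lap_continuous {φ : E2 → ℝ} (hφ : ContDiff ℝ (⊤ : ℕ∞) φ) : Continuous (lap φ) := by
  apply continuous_finset_sum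
  intro i _
  have h1 : ContDiff ℝ (⊤ : ℕ∞) (fun y => fderiv ℝ φ y (EuclideanSpace.single i 1)) :=
    (hφ.fderiv_right (m := (⊤ : ℕ∞)) le_rfl).clm_apply contDiff_const
  exact ((h1.fderiv_right (m := (⊤ : ℕ∞)) le_rfl).clm_apply contDiff_const).continuous

lemma lap_hcs {φ : E2 → ℝ} (hφc : HasCompactSupport φ) : HasCompactSupport (lap φ) := by
  have h : ∀ i : Fin 2, HasCompactSupport (fun x =>
      fderiv ℝ (fun y => fderiv ℝ φ y (EuclideanSpace.single i 1)) x
        (EuclideanSpace.single i 1)) := by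
    intro i
    exact (hφc.fderiv_apply ℝ (EuclideanSpace.single i 1)).fderiv_apply ℝ
      (EuclideanSpace.single i 1)
  have heq : lap φ = fun x =>
      (fderiv ℝ (fun y => fderiv ℝ φ y (EuclideanSpace.single (0 : Fin 2) 1)) x
        (EuclideanSpace.single (0 : Fin 2) 1)) +
      (fderiv ℝ (fun y => fderiv ℝ φ y (EuclideanSpace.single (1 : Fin 2) 1)) x
        (EuclideanSpace.single (1 : Fin 2) 1)) := by
    funext x
    simp [lap, Fin.sum_univ_two]
  rw [heq]
  exact (h 0).add (h 1)

/-- Every element of the closure of the graph of `P₃` still satisfies the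
distributional Laplacian identity. -/
lemma isDistLaplacianOn_of_mem_closure_graphP (S : Setting3)
    {p : (↥(closure S.G) →ᵇ ℝ) × (↥(closure S.G) →ᵇ ℝ)} (hp : p ∈ closure S.graphP) :
    IsDistLaplacianOn S.G (extendByZero S.G p.1) (extendByZero S.G p.2) := by
  intro φ hφ hφc hφs
  obtain ⟨a, ha, hlim⟩ := mem_closure_iff_seq_limit.1 hp
  have hlapc : Continuous (lap φ) := lap_continuous hφ
  obtain ⟨C₁, hC₁⟩ := hlapc.bounded_above_of_compact_support (lap_hcs hφc)
  obtain ⟨C₂, hC₂⟩ := hφ.continuous.bounded_above_of_compact_support hφc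
  have h1 : Filter.Tendsto (fun n => ∫ x in S.G, extendByZero S.G (a n).1 x * lap φ x)
      Filter.atTop (nhds (∫ x in S.G, extendByZero S.G p.1 x * lap φ x)) :=
    tendsto_integral_ext_mul S.hG_open S.hG_bdd
      ((continuous_fst.tendsto p).comp hlim) hlapc hC₁
  have h2 : Filter.Tendsto (fun n => ∫ x in S.G, extendByZero S.G (a n).2 x * φ x)
      Filter.atTop (nhds (∫ x in S.G, extendByZero S.G p.2 x * φ x)) :=
    tendsto_integral_ext_mul S.hG_open S.hG_bdd
      ((continuous_snd.tendsto p).comp hlim) hφ.continuous hC₂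
  have heq : (fun n => ∫ x in S.G, extendByZero S.G (a n).1 x * lap φ x)
      = fun n => ∫ x in S.G, extendByZero S.G (a n).2 x * φ x :=
    funext fun n => (ha n).2.2 φ hφ hφc hφs
  rw [heq] at h1
  exact tendsto_nhds_unique h1 h2

end P3Aux

open P3Aux in
/-- The operator `P3 u = Δu` with domain `{u ∈ C3(Ḡ) : Δu ∈ C3(Ḡ)}` admits a closure
in the Banach space `C3(Ḡ)`: the closure of its graph is again the graph of a
(single-valued) operator. -/
theorem P3_admits_closure (S : Setting3) :
    ∀ p ∈ closure S.graphP, ∀ q ∈ closure S.graphP, p.1 = q.1 → p.2 = q.2 := by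
  intro p hp q hq hpq
  have h1 := isDistLaplacianOn_of_mem_closure_graphP S hp
  have h2 := isDistLaplacianOn_of_mem_closure_graphP S hq
  set d := p.2 - q.2 with hd
  have hzero : ∀ φ : E2 → ℝ, ContDiff ℝ (⊤ : ℕ∞) φ → HasCompactSupport φ →
      tsupport φ ⊆ S.G → ∫ x in S.G, extendByZero S.G d x * φ x = 0 := by
    intro φ hφ hφc hφs
    obtain ⟨C₂, hC₂⟩ := hφ.continuous.bounded_above_of_compact_support hφc
    have e1 := h1 φ hφ hφc hφs
    have e2 := h2 φ hφ hφc hφs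
    rw [hpq] at e1
    have hsplit : ∫ x in S.G, extendByZero S.G d x * φ x =
        (∫ x in S.G, extendByZero S.G p.2 x * φ x)
          - ∫ x in S.G, extendByZero S.G q.2 x * φ x := by
      rw [← integral_sub (integrableOn_ext_mul S.hG_open S.hG_bdd p.2 hφ.continuous hC₂)
        (integrableOn_ext_mul S.hG_open S.hG_bdd q.2 hφ.continuous hC₂)]
      congr 1
      funext x
      rw [hd, extendByZero_sub]
      simp [sub_mul]
    rw [hsplit, ← e1, ← e2, sub_self]
  have hcontd : ContinuousOn (extendByZero S.G d) (closure S.G) :=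
    continuousOn_extendByZero d
  have hloc : LocallyIntegrableOn (extendByZero S.G d) S.G volume :=
    (hcontd.mono subset_closure).locallyIntegrableOn S.hG_open.measurableSet
  have hae : ∀ᵐ x, x ∈ S.G → extendByZero S.G d x = 0 := by
    apply S.hG_open.ae_eq_zero_of_integral_contDiff_smul_eq_zero hloc
    intro g hg hgc hgs
    have hout : ∀ x, x ∉ S.G → g x • extendByZero S.G d x = 0 := by
      intro x hx
      have hg0 : g x = 0 := image_eq_zero_of_notMem_tsupport (fun h => hx (hgs h))
      simp [hg0]
    rw [← setIntegral_eq_integral_of_forall_compl_eq_zero hout]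
    have := hzero g hg hgc hgs
    simpa [smul_eq_mul, mul_comm] using this
  have hae' : extendByZero S.G d =ᵐ[volume.restrict S.G] 0 := by
    filter_upwards [ae_restrict_mem S.hG_open.measurableSet, ae_restrict_of_ae hae]
      with x h1' h2'
    exact h2' h1'
  have heqG : Set.EqOn (extendByZero S.G d) 0 S.G :=
    Measure.eqOn_open_of_ae_eq hae' S.hG_open (hcontd.mono subset_closure)
      continuousOn_const
  have heqCl : Set.EqOn (extendByZero S.G d) 0 (closure S.G) :=
    heqG.of_subset_closure hcontd continuousOn_const subset_closure subset_rfl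
  have hd0 : d = 0 := by
    ext z
    have hz := heqCl z.2
    rw [extendByZero_apply d z.2] at hz
    simpa using hz
  exact sub_eq_zero.mp hd0


end
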